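/- Let n ≥ 1, i ∈ {1,…,n}, let Ω ⊆ ℝ² be open with coordinates (x,t), and let λ = (λ_1,…,λ_n) : Ω → ℝ^n be smooth and satisfy the i-th Killing system in λ-coordinates, ∂λ_j/∂t = −(∂q_i/∂λ_j)(λ) · ∂λ_j/∂x for every j = 1,…,n. Then the functions q_j := q_j(λ(x,t)) satisfy the i-th Killing system in Viète coordinates: ∂q_j/∂t = (Z_i[q])^j = ∂_x q_{j+i−1} + ∑_{k=1}^{j−1} (q_k ∂_x q_{j+i−k−1} − q_{j+i−k−1} ∂_x q_k) for every j = 1,…,n (with q_α := 0 for α > n). -/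

import Mathlib

noncomputable section

/-- Viète polynomial `q_i(λ) = (-1)^i e_i(λ)`; by convention `q_0 = 1` and `q_i = 0` for `i > n`. -/
def viete {n : ℕ} (i : ℕ) (lam : Fin n → ℝ) : ℝ :=
  (-1 : ℝ) ^ i * ∑ s ∈ Finset.powersetCard i (Finset.univ : Finset (Fin n)), ∏ j ∈ s, lam j

/-- The partial derivative `∂q_i/∂λ_j` of the `i`-th Viète polynomial. -/
def vieteD {n : ℕ} (i : ℕ) (lam : Fin n → ℝ) (j : Fin n) : ℝ :=
  fderiv ℝ (viete i) lam (Pi.single j 1)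

/-- `Δ_j(λ) = ∏_{s ≠ j} (λ_j - λ_s)`. -/
def Delta {n : ℕ} (lam : Fin n → ℝ) (j : Fin n) : ℝ :=
  ∏ s ∈ Finset.univ.erase j, (lam j - lam s)

/-- The `j`-th component of the `i`-th Killing vector field in Viète coordinates,
`(Z_i[q])^j = ∂_x q_{j+i-1} + ∑_{k=1}^{j-1} (q_k ∂_x q_{j+i-k-1} - q_{j+i-k-1} ∂_x q_k)`,
with the convention `q_α := 0` for `α > n`; `Q` are the values, `Qx` the `x`-derivatives. -/
def killingZ (n i j : ℕ) (Q Qx : ℕ → ℝ) : ℝ :=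
  (if j + i - 1 ≤ n then Qx (j + i - 1) else 0) +
    ∑ k ∈ Finset.Icc 1 (j - 1),
      ((if k ≤ n then Q k else 0) * (if j + i - k - 1 ≤ n then Qx (j + i - k - 1) else 0) -
        (if j + i - k - 1 ≤ n then Q (j + i - k - 1) else 0) * (if k ≤ n then Qx k else 0))

/-- Viète polynomials of the tuple `λ` with the `m`-th variable removed. -/
def hatQ {n : ℕ} (lam : Fin n → ℝ) (m : Fin n) (a : ℕ) : ℝ :=
  (-1 : ℝ) ^ a * ∑ s ∈ Finset.powersetCard a (Finset.univ.erase m), ∏ j ∈ s, lam j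

lemma hatQ_zero {n : ℕ} (lam : Fin n → ℝ) (m : Fin n) : hatQ lam m 0 = 1 := by
  simp [hatQ]

lemma key_bij {n : ℕ} (a : ℕ) (lam : Fin n → ℝ) (m : Fin n) :
    ∑ s ∈ (Finset.powersetCard (a+1) (Finset.univ : Finset (Fin n))).filter (fun s => m ∈ s),
      ∏ j ∈ s.erase m, lam j
    = ∑ t ∈ Finset.powersetCard a (Finset.univ.erase m), ∏ j ∈ t, lam j := by
  refine Finset.sum_nbij' (fun s => s.erase m) (fun t => insert m t) ?_ ?_ ?_ ?_ ?_
  · intro s hs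
    simp only [Finset.mem_filter, Finset.mem_powersetCard] at hs ⊢
    obtain ⟨⟨hsub, hcard⟩, hm⟩ := hs
    constructor
    · exact Finset.erase_subset_erase m hsub
    · rw [Finset.card_erase_of_mem hm, hcard]; omega
  · intro t ht
    simp only [Finset.mem_filter, Finset.mem_powersetCard] at ht ⊢
    obtain ⟨hsub, hcard⟩ := ht
    have hm : m ∉ t := fun h => (Finset.mem_erase.mp (hsub h)).1 rfl
    refine ⟨⟨Finset.insert_subset (Finset.mem_univ m) (hsub.trans (Finset.erase_subset m _)), ?_⟩,
      Finset.mem_insert_self m t⟩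
    rw [Finset.card_insert_of_notMem hm, hcard]
  · intro s hs
    simp only [Finset.mem_filter] at hs
    exact Finset.insert_erase hs.2
  · intro t ht
    simp only [Finset.mem_powersetCard] at ht
    have hm : m ∉ t := fun h => (Finset.mem_erase.mp (ht.1 h)).1 rfl
    exact Finset.erase_insert hm
  · intro s hs
    rfl

lemma hasFDerivAt_viete {n : ℕ} (a : ℕ) (lam : Fin n → ℝ) :
    HasFDerivAt (viete a)
      ((-1 : ℝ) ^ a • ∑ s ∈ Finset.powersetCard a (Finset.univ : Finset (Fin n)),
        ∑ m ∈ s, (∏ j ∈ s.erase m, lam j) • (ContinuousLinearMap.proj m :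
          (Fin n → ℝ) →L[ℝ] ℝ)) lam := by
  unfold viete
  exact HasFDerivAt.const_mul (HasFDerivAt.fun_sum fun s _ => hasFDerivAt_finset_prod) _

lemma vieteD_formula {n : ℕ} (a : ℕ) (lam : Fin n → ℝ) (m : Fin n) :
    vieteD a lam m = (-1 : ℝ) ^ a *
      ∑ s ∈ (Finset.powersetCard a (Finset.univ : Finset (Fin n))).filter (fun s => m ∈ s),
        ∏ j ∈ s.erase m, lam j := by
  rw [vieteD, (hasFDerivAt_viete a lam).fderiv]
  simp only [ContinuousLinearMap.smul_apply, ContinuousLinearMap.sum_apply,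
    ContinuousLinearMap.smul_apply, ContinuousLinearMap.proj_apply, smul_eq_mul]
  rw [Finset.sum_filter]
  congr 1
  refine Finset.sum_congr rfl fun s _ => ?_
  simp [Pi.single_apply, mul_ite, Finset.sum_ite_eq']

lemma vieteD_succ {n : ℕ} (a : ℕ) (lam : Fin n → ℝ) (m : Fin n) :
    vieteD (a+1) lam m = -hatQ lam m a := by
  rw [vieteD_formula, key_bij, hatQ, pow_succ]
  ring

lemma viete_eq_zero {n : ℕ} {a : ℕ} (h : n < a) (lam : Fin n → ℝ) : viete a lam = 0 := by
  rw [viete, Finset.powersetCard_eq_empty.mpr (by simpa using h)]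
  simp

lemma viete_split {n : ℕ} (a : ℕ) (lam : Fin n → ℝ) (m : Fin n) :
    viete (a+1) lam = hatQ lam m (a+1) - lam m * hatQ lam m a := by
  rw [viete, hatQ, hatQ]
  rw [← Finset.sum_filter_add_sum_filter_not
    (Finset.powersetCard (a+1) (Finset.univ : Finset (Fin n))) (fun s => m ∈ s)]
  have h1 : (Finset.powersetCard (a+1) (Finset.univ : Finset (Fin n))).filter (fun s => m ∉ s)
      = Finset.powersetCard (a+1) (Finset.univ.erase m) := by
    ext s
    simp [Finset.mem_powersetCard, Finset.subset_erase, and_comm, and_assoc]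
  have h2 : ∑ s ∈ (Finset.powersetCard (a+1) (Finset.univ : Finset (Fin n))).filter
      (fun s => m ∈ s), ∏ j ∈ s, lam j
      = lam m * ∑ t ∈ Finset.powersetCard a (Finset.univ.erase m), ∏ j ∈ t, lam j := by
    rw [← key_bij a lam m, Finset.mul_sum]
    refine Finset.sum_congr rfl fun s hs => ?_
    exact (Finset.mul_prod_erase s lam (Finset.mem_filter.mp hs).2).symm
  rw [h1, h2]
  ring

lemma fderiv_viete_apply {n : ℕ} (a : ℕ) (lam : Fin n → ℝ) (w : Fin n → ℝ) :
    fderiv ℝ (viete a) lam w = ∑ m, vieteD a lam m * w m := by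
  rw [(hasFDerivAt_viete a lam).fderiv]
  simp only [ContinuousLinearMap.smul_apply, ContinuousLinearMap.sum_apply,
    ContinuousLinearMap.smul_apply, ContinuousLinearMap.proj_apply, smul_eq_mul]
  have hrhs : ∑ m, vieteD a lam m * w m
      = ∑ m, ∑ s ∈ Finset.powersetCard a (Finset.univ : Finset (Fin n)),
          (if m ∈ s then (-1 : ℝ)^a * ((∏ j ∈ s.erase m, lam j) * w m) else 0) := by
    refine Finset.sum_congr rfl fun m _ => ?_
    rw [vieteD_formula, mul_assoc, Finset.sum_mul, Finset.mul_sum, Finset.sum_filter]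
  rw [hrhs, Finset.sum_comm, Finset.mul_sum]
  refine Finset.sum_congr rfl fun s _ => ?_
  rw [Finset.sum_ite_mem, Finset.univ_inter, Finset.mul_sum]

/-- The key algebraic identity behind the Killing system transformation. -/
lemma key_identity (H : ℕ → ℝ) (hH0 : H 0 = 1) (L : ℝ) (j' i' : ℕ) :
    -H j' * -(-H i') = -H (j' + i') + ∑ k ∈ Finset.range j',
      ((H (k+1) - L * H k) * -H (j' + i' - k - 1) -
        (H (j' + i' - k) - L * H (j' + i' - k - 1)) * -H k) := by
  have e1 : ∀ k ∈ Finset.range j',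
      (H (k+1) - L * H k) * -H (j' + i' - k - 1) -
        (H (j' + i' - k) - L * H (j' + i' - k - 1)) * -H k
      = H k * H (j' + i' - k) - H (k+1) * H (j' + i' - (k+1)) := by
    intro k hk
    have e : j' + i' - (k + 1) = j' + i' - k - 1 := by omega
    rw [e]; ring
  rw [Finset.sum_congr rfl e1, Finset.sum_range_sub' (fun l => H l * H (j' + i' - l))]
  have e2 : j' + i' - 0 = j' + i' := by omega
  have e3 : j' + i' - j' = i' := by omega
  rw [e2, e3, hH0]
  ring

lemma killingZ_unguard (n i j : ℕ) (Q Qx : ℕ → ℝ)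
    (hQ : ∀ a, n < a → Q a = 0) (hQx : ∀ a, n < a → Qx a = 0) :
    killingZ n i j Q Qx = Qx (j + i - 1) +
      ∑ k ∈ Finset.Icc 1 (j - 1), (Q k * Qx (j + i - k - 1) - Q (j + i - k - 1) * Qx k) := by
  unfold killingZ
  congr 1
  · split_ifs with h
    · rfl
    · exact (hQx _ (by omega)).symm
  · refine Finset.sum_congr rfl fun k hk => ?_
    have e : ∀ (f : ℕ → ℝ), (∀ a, n < a → f a = 0) → ∀ a,
        (if a ≤ n then f a else 0) = f a := by
      intro f hf a
      split_ifs with h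
      · rfl
      · exact (hf a (by omega)).symm
    rw [e Q hQ, e Q hQ, e Qx hQx, e Qx hQx]

lemma assemble {n : ℕ} (c : ℕ → Fin n → ℝ) (Q : ℕ → ℝ) (X : Fin n → ℝ) (j' i' : ℕ)
    (hkey : ∀ m, c (j'+1) m * -(c (i'+1) m) = c (j'+i'+1) m +
      ∑ k ∈ Finset.range j', (Q (k+1) * c (j'+i'-k) m - Q (j'+i'-k) * c (k+1) m)) :
    ∑ m, c (j'+1) m * (-(c (i'+1) m) * X m)
      = (∑ m, c (j'+i'+1) m * X m) + ∑ k ∈ Finset.range j',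
          (Q (k+1) * ∑ m, c (j'+i'-k) m * X m - Q (j'+i'-k) * ∑ m, c (k+1) m * X m) := by
  have h1 : ∀ k ∈ Finset.range j',
      Q (k+1) * ∑ m, c (j'+i'-k) m * X m - Q (j'+i'-k) * ∑ m, c (k+1) m * X m
      = ∑ m, (Q (k+1) * c (j'+i'-k) m - Q (j'+i'-k) * c (k+1) m) * X m := by
    intro k hk
    rw [Finset.mul_sum, Finset.mul_sum, ← Finset.sum_sub_distrib]
    exact Finset.sum_congr rfl fun m _ => by ring
  rw [Finset.sum_congr rfl h1, Finset.sum_comm, ← Finset.sum_add_distrib]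
  refine Finset.sum_congr rfl fun m _ => ?_
  rw [show c (j'+1) m * (-(c (i'+1) m) * X m) = (c (j'+1) m * -(c (i'+1) m)) * X m by ring,
    hkey m, add_mul, Finset.sum_mul]

theorem killing_system_in_viete_coordinates (n : ℕ) (hn : 1 ≤ n) (i : ℕ)
    (hi1 : 1 ≤ i) (hi2 : i ≤ n) (Ω : Set (ℝ × ℝ)) (hΩ : IsOpen Ω)
    (lam : ℝ × ℝ → Fin n → ℝ) (hsmooth : ContDiffOn ℝ (⊤ : ℕ∞) lam Ω)
    (hkill : ∀ p ∈ Ω, ∀ j : Fin n,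
      fderiv ℝ (fun s => lam s j) p ((0 : ℝ), (1 : ℝ)) =
        -vieteD i (lam p) j * fderiv ℝ (fun s => lam s j) p ((1 : ℝ), (0 : ℝ))) :
    ∀ p ∈ Ω, ∀ j, 1 ≤ j → j ≤ n →
      fderiv ℝ (fun s => viete j (lam s)) p ((0 : ℝ), (1 : ℝ)) =
        killingZ n i j (fun a => viete a (lam p))
          (fun a => fderiv ℝ (fun s => viete a (lam s)) p ((1 : ℝ), (0 : ℝ))) := by
  intro p hp j hj1 hj2
  obtain ⟨i', rfl⟩ : ∃ i', i = i' + 1 := ⟨i - 1, by omega⟩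
  obtain ⟨j', rfl⟩ : ∃ j', j = j' + 1 := ⟨j - 1, by omega⟩
  have hdiff : DifferentiableAt ℝ lam p :=
    (hsmooth.differentiableOn (by simp)).differentiableAt (hΩ.mem_nhds hp)
  -- chain rule
  have hchain : ∀ (a : ℕ) (v : ℝ × ℝ), fderiv ℝ (fun s => viete a (lam s)) p v
      = ∑ m, vieteD a (lam p) m * fderiv ℝ (fun s => lam s m) p v := by
    intro a v
    have h1 := (hasFDerivAt_viete a (lam p)).comp p hdiff.hasFDerivAt
    rw [show (fun s => viete a (lam s)) = viete a ∘ lam from rfl, h1.fderiv]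
    simp only [ContinuousLinearMap.coe_comp', Function.comp_apply]
    rw [← (hasFDerivAt_viete a (lam p)).fderiv, fderiv_viete_apply]
    refine Finset.sum_congr rfl fun m _ => ?_
    congr 1
    have h2 := hasFDerivAt_pi'.1 hdiff.hasFDerivAt m
    rw [h2.fderiv]
    rfl
  -- the functions Q, Qx vanish above n
  have hQ0 : ∀ a, n < a → viete a (lam p) = 0 := fun a ha => viete_eq_zero ha _
  have hQx0 : ∀ a, n < a → fderiv ℝ (fun s => viete a (lam s)) p ((1:ℝ), (0:ℝ)) = 0 := by
    intro a ha
    have : (fun s => viete a (lam s)) = fun _ => (0 : ℝ) :=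
      funext fun s => viete_eq_zero ha _
    rw [this, fderiv_fun_const]
    rfl
  rw [killingZ_unguard n (i'+1) (j'+1) _ _ hQ0 hQx0]
  -- index normalizations
  have e1 : j' + 1 + (i' + 1) - 1 = j' + i' + 1 := by omega
  have e2 : j' + 1 - 1 = j' := by omega
  rw [e1, e2]
  -- convert Icc sum to range sum
  have e3 : ∑ k ∈ Finset.Icc 1 j',
      (viete k (lam p) * fderiv ℝ (fun s => viete (j'+1+(i'+1)-k-1) (lam s)) p ((1:ℝ),(0:ℝ)) -
        viete (j'+1+(i'+1)-k-1) (lam p) * fderiv ℝ (fun s => viete k (lam s)) p ((1:ℝ),(0:ℝ)))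
      = ∑ k ∈ Finset.range j',
      (viete (k+1) (lam p) * fderiv ℝ (fun s => viete (j'+i'-k) (lam s)) p ((1:ℝ),(0:ℝ)) -
        viete (j'+i'-k) (lam p) * fderiv ℝ (fun s => viete (k+1) (lam s)) p ((1:ℝ),(0:ℝ))) := by
    rw [← Finset.Ico_add_one_right_eq_Icc, Finset.sum_Ico_eq_sum_range]
    refine Finset.sum_congr (by norm_num) fun k hk => ?_
    have f2 : j' + 1 + (i' + 1) - (1 + k) - 1 = j' + i' - k := by omega
    have f1 : 1 + k = k + 1 := by omega
    rw [f2, f1]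
  rw [e3]
  -- rewrite everything via the chain rule and the Killing system
  have hT : ∀ m, fderiv ℝ (fun s => lam s m) p ((0:ℝ),(1:ℝ))
      = -(vieteD (i'+1) (lam p) m) * fderiv ℝ (fun s => lam s m) p ((1:ℝ),(0:ℝ)) :=
    fun m => hkill p hp m
  simp only [hchain]
  have lhs_eq : ∑ m, vieteD (j'+1) (lam p) m * fderiv ℝ (fun s => lam s m) p ((0:ℝ),(1:ℝ))
      = ∑ m, vieteD (j'+1) (lam p) m * (-(vieteD (i'+1) (lam p) m) *
          fderiv ℝ (fun s => lam s m) p ((1:ℝ),(0:ℝ))) := by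
    exact Finset.sum_congr rfl fun m _ => by rw [hT m]
  rw [lhs_eq]
  -- apply the assembly lemma with the key identity
  refine assemble (fun a m => vieteD a (lam p) m) (fun a => viete a (lam p))
    (fun m => fderiv ℝ (fun s => lam s m) p ((1:ℝ),(0:ℝ))) j' i' ?_
  intro m
  beta_reduce
  -- reduce to the hatQ identity
  have hc : ∀ a, vieteD (a+1) (lam p) m = -hatQ (lam p) m a := fun a => vieteD_succ a _ m
  have hq : ∀ a, viete (a+1) (lam p)
      = hatQ (lam p) m (a+1) - lam p m * hatQ (lam p) m a := fun a => viete_split a _ m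
  have hsum : ∀ k ∈ Finset.range j',
      viete (k+1) (lam p) * vieteD (j'+i'-k) (lam p) m -
        viete (j'+i'-k) (lam p) * vieteD (k+1) (lam p) m
      = (hatQ (lam p) m (k+1) - lam p m * hatQ (lam p) m k) * -hatQ (lam p) m (j'+i'-k-1) -
        (hatQ (lam p) m (j'+i'-k) - lam p m * hatQ (lam p) m (j'+i'-k-1)) * -hatQ (lam p) m k := by
    intro k hk
    have hk' := Finset.mem_range.mp hk
    have e : j' + i' - k = (j' + i' - k - 1) + 1 := by omega
    rw [e, hc, hc, hq, hq, ← e]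
  rw [hc j', hc i', show j'+i'+1 = (j'+i')+1 from rfl, hc (j'+i'), Finset.sum_congr rfl hsum]
  exact key_identity (hatQ (lam p) m) (hatQ_zero _ m) (lam p m) j' i'
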